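/- Let f : ℝᵖ × ℝᵠ → ℝ and g : ℝᵖ × ℝᵠ → ℝ satisfy: ‖∇_y f‖ ≤ C_f everywhere, ∇_y f is L_f-Lipschitz, ∇²_{yy} g(x, y) ⪰ μI for all (x, y), ∇²_{yy} g is L_{gyy}-Lipschitz in (x, y), and let y*(x) be the minimizer of g(x, ·), which is C_y-Lipschitz. Then v*(x) := [∇²_{yy} g(x, y*(x))]⁻¹ ∇_y f(x, y*(x)) satisfies ‖v*(x₁) - v*(x₂)‖ ≤ (L_f/μ + C_f L_{gyy}/μ²)(1 + C_y)‖x₁ - x₂‖ for all x₁, x₂. -/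

import Mathlib

open scoped RealInnerProductSpace

private lemma aux_coercive {E : Type*} [NormedAddCommGroup E] [InnerProductSpace ℝ E]
    (μ : ℝ) (v u : E) (h : μ * ‖v‖ ^ 2 ≤ ⟪u, v⟫) (hμ : 0 ≤ μ) : μ * ‖v‖ ≤ ‖u‖ := by
  rcases eq_or_lt_of_le (norm_nonneg v) with hv | hv
  · simp [← hv]
  · have h2 : ⟪u, v⟫ ≤ ‖u‖ * ‖v‖ := real_inner_le_norm u v
    nlinarith

private lemma aux_sqrt (a b : ℝ) (ha : 0 ≤ a) (hb : 0 ≤ b) :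
    Real.sqrt (a ^ 2 + b ^ 2) ≤ a + b := by
  rw [show a ^ 2 + b ^ 2 = (a + b) ^ 2 - 2 * a * b by ring]
  calc Real.sqrt ((a + b) ^ 2 - 2 * a * b) ≤ Real.sqrt ((a + b) ^ 2) := by
        apply Real.sqrt_le_sqrt; nlinarith
    _ = a + b := by rw [Real.sqrt_sq (by linarith)]

theorem stmt_9 {p q : ℕ}
    (gradyf : EuclideanSpace ℝ (Fin p) → EuclideanSpace ℝ (Fin q) →
      EuclideanSpace ℝ (Fin q))
    (Cf Lf μ Lgyy Cy : ℝ) (hμ : 0 < μ)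
    (hbound : ∀ x y, ‖gradyf x y‖ ≤ Cf)
    (hLipf : ∀ x₁ y₁ x₂ y₂, ‖gradyf x₁ y₁ - gradyf x₂ y₂‖
      ≤ Lf * Real.sqrt (‖x₁ - x₂‖ ^ 2 + ‖y₁ - y₂‖ ^ 2))
    (H : EuclideanSpace ℝ (Fin p) → EuclideanSpace ℝ (Fin q) →
      (EuclideanSpace ℝ (Fin q) →L[ℝ] EuclideanSpace ℝ (Fin q)))
    (hHlow : ∀ x y v, μ * ‖v‖ ^ 2 ≤ ⟪H x y v, v⟫)
    (hHLip : ∀ x₁ y₁ x₂ y₂, ‖H x₁ y₁ - H x₂ y₂‖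
      ≤ Lgyy * Real.sqrt (‖x₁ - x₂‖ ^ 2 + ‖y₁ - y₂‖ ^ 2))
    (ystar : EuclideanSpace ℝ (Fin p) → EuclideanSpace ℝ (Fin q))
    (hystar : ∀ x₁ x₂, ‖ystar x₁ - ystar x₂‖ ≤ Cy * ‖x₁ - x₂‖)
    (vstar : EuclideanSpace ℝ (Fin p) → EuclideanSpace ℝ (Fin q))
    (hvstar : ∀ x, H x (ystar x) (vstar x) = gradyf x (ystar x)) :
    ∀ x₁ x₂, ‖vstar x₁ - vstar x₂‖
      ≤ (Lf / μ + Cf * Lgyy / μ ^ 2) * (1 + Cy) * ‖x₁ - x₂‖ := by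
  intro x₁ x₂
  set y₁ := ystar x₁ with hy₁
  set y₂ := ystar x₂ with hy₂
  set v₁ := vstar x₁ with hv₁
  set v₂ := vstar x₂ with hv₂
  set S := Real.sqrt (‖x₁ - x₂‖ ^ 2 + ‖y₁ - y₂‖ ^ 2) with hS
  -- basic nonnegativity
  have hCf : 0 ≤ Cf := (norm_nonneg _).trans (hbound x₁ y₁)
  -- key identity:  H₁ (v₁ - v₂) = (b₁ - b₂) + (H₂ - H₁) v₂
  have key : H x₁ y₁ (v₁ - v₂)
      = (gradyf x₁ y₁ - gradyf x₂ y₂) + ((H x₂ y₂ - H x₁ y₁) v₂) := by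
    rw [map_sub, ContinuousLinearMap.sub_apply, hv₁, hv₂, hy₁, hy₂,
      hvstar x₁, hvstar x₂]
    abel
  -- coercivity: μ‖v₁ - v₂‖ ≤ ‖H₁ (v₁ - v₂)‖
  have hcoer : μ * ‖v₁ - v₂‖ ≤ ‖H x₁ y₁ (v₁ - v₂)‖ :=
    aux_coercive μ _ _ (hHlow x₁ y₁ (v₁ - v₂)) hμ.le
  -- bound on ‖v₂‖
  have hv2 : μ * ‖v₂‖ ≤ Cf := by
    have h1 : μ * ‖v₂‖ ≤ ‖H x₂ y₂ v₂‖ :=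
      aux_coercive μ _ _ (hHlow x₂ y₂ v₂) hμ.le
    rw [hv₂, hy₂, hvstar x₂] at h1
    exact h1.trans (hbound x₂ (ystar x₂))
  -- triangle + operator norm
  have htri : ‖H x₁ y₁ (v₁ - v₂)‖
      ≤ ‖gradyf x₁ y₁ - gradyf x₂ y₂‖ + ‖H x₂ y₂ - H x₁ y₁‖ * ‖v₂‖ := by
    rw [key]
    exact (norm_add_le _ _).trans (by
      gcongr
      exact ContinuousLinearMap.le_opNorm _ _)
  have hb : ‖gradyf x₁ y₁ - gradyf x₂ y₂‖ ≤ Lf * S := hLipf x₁ y₁ x₂ y₂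
  have hH : ‖H x₂ y₂ - H x₁ y₁‖ ≤ Lgyy * S := by
    have := hHLip x₂ y₂ x₁ y₁
    rwa [show ‖x₂ - x₁‖ = ‖x₁ - x₂‖ from norm_sub_rev _ _,
      show ‖y₂ - y₁‖ = ‖y₁ - y₂‖ from norm_sub_rev _ _] at this
  -- bound on S
  have hSx : ‖x₁ - x₂‖ ≤ S := by
    rw [hS]
    rw [show ‖x₁ - x₂‖ = Real.sqrt (‖x₁ - x₂‖ ^ 2) by
      rw [Real.sqrt_sq (norm_nonneg _)]]
    apply Real.sqrt_le_sqrt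
    nlinarith [sq_nonneg ‖y₁ - y₂‖, Real.sq_sqrt (sq_nonneg ‖x₁ - x₂‖)]
  have hSle : S ≤ (1 + Cy) * ‖x₁ - x₂‖ := by
    have h1 : S ≤ ‖x₁ - x₂‖ + ‖y₁ - y₂‖ :=
      aux_sqrt _ _ (norm_nonneg _) (norm_nonneg _)
    have h2 : ‖y₁ - y₂‖ ≤ Cy * ‖x₁ - x₂‖ := hystar x₁ x₂
    linarith
  -- case on ‖x₁ - x₂‖
  rcases eq_or_lt_of_le (norm_nonneg (x₁ - x₂)) with hx | hx
  · -- x₁ = x₂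
    have hxeq : x₁ = x₂ := by
      have := (norm_eq_zero.mp hx.symm); exact sub_eq_zero.mp this
    subst hxeq
    have : μ * ‖v₁ - v₂‖ ≤ 0 := by
      have heq : H x₁ y₁ (v₁ - v₂) = 0 := by
        rw [key]; simp [hy₁, hy₂]
      rw [heq, norm_zero] at hcoer; exact hcoer
    have h0 : ‖v₁ - v₂‖ = 0 :=
      le_antisymm (by nlinarith) (norm_nonneg _)
    simp [h0]
  · -- ‖x₁ - x₂‖ > 0 hence S > 0, and Lf, Lgyy ≥ 0
    have hSpos : 0 < S := lt_of_lt_of_le hx hSx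
    have hLfS : 0 ≤ Lf * S := (norm_nonneg _).trans hb
    have hLgyyS : 0 ≤ Lgyy * S := (norm_nonneg _).trans hH
    have hLf : 0 ≤ Lf := by
      by_contra hc
      push_neg at hc
      have h := mul_pos (neg_pos.mpr hc) hSpos
      rw [neg_mul] at h
      linarith
    have hLgyy : 0 ≤ Lgyy := by
      by_contra hc
      push_neg at hc
      have h := mul_pos (neg_pos.mpr hc) hSpos
      rw [neg_mul] at h
      linarith
    have hA : ‖H x₂ y₂ - H x₁ y₁‖ * ‖v₂‖ ≤ (Lgyy * S) * ‖v₂‖ :=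
      mul_le_mul_of_nonneg_right hH (norm_nonneg _)
    have hB : μ * ((Lgyy * S) * ‖v₂‖) ≤ (Lgyy * S) * Cf := by
      have h := mul_le_mul_of_nonneg_left hv2 hLgyyS
      calc μ * ((Lgyy * S) * ‖v₂‖) = (Lgyy * S) * (μ * ‖v₂‖) := by ring
        _ ≤ (Lgyy * S) * Cf := h
    have step1 : μ * ‖v₁ - v₂‖ ≤ Lf * S + (Lgyy * S) * ‖v₂‖ := by linarith
    have hc1 : 0 ≤ μ * Lf + Lgyy * Cf :=
      add_nonneg (mul_nonneg hμ.le hLf) (mul_nonneg hLgyy hCf)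
    have final : μ ^ 2 * ‖v₁ - v₂‖ ≤ (μ * Lf + Lgyy * Cf) * ((1 + Cy) * ‖x₁ - x₂‖) := by
      have h2 := mul_le_mul_of_nonneg_left step1 hμ.le
      have h3 := mul_le_mul_of_nonneg_left hSle hc1
      calc μ ^ 2 * ‖v₁ - v₂‖ = μ * (μ * ‖v₁ - v₂‖) := by ring
        _ ≤ μ * (Lf * S + (Lgyy * S) * ‖v₂‖) := h2
        _ = μ * Lf * S + μ * ((Lgyy * S) * ‖v₂‖) := by ring
        _ ≤ μ * Lf * S + (Lgyy * S) * Cf := by linarith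
        _ = (μ * Lf + Lgyy * Cf) * S := by ring
        _ ≤ (μ * Lf + Lgyy * Cf) * ((1 + Cy) * ‖x₁ - x₂‖) := h3
    have hμ2 : (0:ℝ) < μ ^ 2 := by positivity
    rw [show (Lf / μ + Cf * Lgyy / μ ^ 2) * (1 + Cy) * ‖x₁ - x₂‖
        = ((μ * Lf + Lgyy * Cf) * ((1 + Cy) * ‖x₁ - x₂‖)) / μ ^ 2 by
      field_simp]
    rw [le_div_iff₀ hμ2]
    linarith [final]
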